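/- For all c, r, s ∈ [0,∞), the infimum inf_{θ ≥ 0} [ θ·c + |r − θ| + |s − θ| ] equals r + s − min(r,s)·max(2 − c, 0). Consequently, for the total-variation entropy φ(x) = |x − 1| (whose reverse entropy satisfies θ·ψ(r/θ) = |r − θ|, with value r at θ = 0), the perspective transform satisfies H_c(r,s) = r + s − (r ∧ s)·(2 − c)₊. -/

import Mathlib

open MeasureTheory ENNReal NNReal Filter

noncomputable section

/-- The recession constant `φ'_∞ = lim_{r → ∞} φ(r)/r` of an entropy function. -/
def recessionConst (φ : ℝ≥0 → ℝ≥0∞) : ℝ≥0∞ :=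
  Filter.limsup (fun r : ℝ≥0 => φ r / (r : ℝ≥0∞)) Filter.atTop

/-- The reverse entropy `ψ(r) = r·φ(1/r)` for `r > 0`, with `ψ(0) = φ'_∞`. -/
def reverseEnt (φ : ℝ≥0 → ℝ≥0∞) (r : ℝ≥0) : ℝ≥0∞ :=
  if r = 0 then recessionConst φ else (r : ℝ≥0∞) * φ r⁻¹

/-- The cost `L_c(r,s) = c + ψ(r) + ψ(s)`. -/
def Lcost (φ : ℝ≥0 → ℝ≥0∞) (c : ℝ≥0∞) (r s : ℝ≥0) : ℝ≥0∞ :=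
  c + reverseEnt φ r + reverseEnt φ s

/-- The perspective term `θ·L_c(r/θ, s/θ)`, with the `θ = 0` term interpreted as
`ψ'_∞·(r+s) = φ(0)·(r+s)`. -/
def persp (φ : ℝ≥0 → ℝ≥0∞) (c : ℝ≥0∞) (r s θ : ℝ≥0) : ℝ≥0∞ :=
  if θ = 0 then φ 0 * ((r : ℝ≥0∞) + (s : ℝ≥0∞))
  else (θ : ℝ≥0∞) * Lcost φ c (r / θ) (s / θ)

/-- `H_c(r,s) = inf_{θ ≥ 0} θ·L_c(r/θ, s/θ)`, the perspective transform of `L_c`. -/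
def Hcost (φ : ℝ≥0 → ℝ≥0∞) (c : ℝ≥0∞) (r s : ℝ≥0) : ℝ≥0∞ :=
  ⨅ θ : ℝ≥0, persp φ c r s θ

/-- The total-variation entropy function `φ(x) = |x − 1|`. -/
def tvEntropy (x : ℝ≥0) : ℝ≥0∞ :=
  ENNReal.ofReal |(x : ℝ) - 1|

lemma tv_recession : recessionConst tvEntropy = 1 := by
  unfold recessionConst
  have h : Tendsto (fun r : ℝ≥0 => tvEntropy r / (r : ℝ≥0∞)) atTop (nhds 1) := by
    have hcoe : Tendsto (fun r : ℝ≥0 => (r:ℝ)) atTop atTop :=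
      tendsto_coe_atTop.2 tendsto_id
    have h0 : Tendsto (fun r : ℝ≥0 => 1 - 1/(r:ℝ)) atTop (nhds 1) := by
      have := (tendsto_inv_atTop_zero).comp hcoe
      simpa [one_div] using tendsto_const_nhds.sub this
    have h1 : Tendsto (fun r : ℝ≥0 => ENNReal.ofReal (1 - 1/(r:ℝ))) atTop (nhds 1) := by
      simpa [Function.comp_def] using (ENNReal.continuous_ofReal.tendsto 1).comp h0
    refine h1.congr' ?_
    filter_upwards [Filter.eventually_ge_atTop (1:ℝ≥0)] with x hx
    have hx1 : (1:ℝ) ≤ (x:ℝ) := by exact_mod_cast hx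
    have hx0 : (0:ℝ) < x := lt_of_lt_of_le one_pos hx1
    have hv : tvEntropy x = ENNReal.ofReal ((x:ℝ) - 1) := by
      unfold tvEntropy; rw [abs_of_nonneg (by linarith)]
    rw [hv, ← ENNReal.ofReal_coe_nnreal, ← ENNReal.ofReal_div_of_pos hx0]
    congr 1
    field_simp
  exact h.limsup_eq

lemma tv_reverseEnt (x : ℝ≥0) : reverseEnt tvEntropy x = ENNReal.ofReal |1 - (x:ℝ)| := by
  rcases eq_or_ne x 0 with rfl | hx
  · simp [reverseEnt, tv_recession]
  · have hx0 : (0:ℝ) < x := by positivity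
    simp only [reverseEnt, if_neg hx, tvEntropy]
    rw [← ENNReal.ofReal_coe_nnreal, ← ENNReal.ofReal_mul (le_of_lt hx0)]
    congr 1
    rw [NNReal.coe_inv, ← abs_of_pos hx0, ← abs_mul]
    congr 1
    field_simp
    rw [abs_of_pos hx0]

/-- **Statement 18.** Computation of the partial optimal transport cone cost: for
`c, r, s ≥ 0`, `inf_{θ ≥ 0} [θc + |r − θ| + |s − θ|] = r + s − min(r,s)·max(2 − c, 0)`;
consequently, for the total-variation entropy `φ(x) = |x − 1|`,
`H_c(r,s) = r + s − (r ∧ s)·(2 − c)₊`. -/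
theorem partial_ot_cone_cost (c r s : ℝ) (hc : 0 ≤ c) (hr : 0 ≤ r) (hs : 0 ≤ s) :
    (⨅ θ : {θ : ℝ // 0 ≤ θ}, (θ.1 * c + |r - θ.1| + |s - θ.1|))
      = r + s - min r s * max (2 - c) 0 ∧
    Hcost tvEntropy (ENNReal.ofReal c) (Real.toNNReal r) (Real.toNNReal s)
      = ENNReal.ofReal (r + s - min r s * max (2 - c) 0) := by
  set V := r + s - min r s * max (2 - c) 0 with hV
  have hm : 0 ≤ min r s := le_min hr hs
  -- lower bound
  have lb : ∀ θ : ℝ, 0 ≤ θ → V ≤ θ * c + |r - θ| + |s - θ| := by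
    intro θ hθ
    have h1 := le_abs_self (r - θ); have h2 := neg_abs_le (r - θ)
    have h3 := le_abs_self (s - θ); have h4 := neg_abs_le (s - θ)
    rcases le_total 2 c with h | h
    · rw [hV, max_eq_right (by linarith)]
      nlinarith
    · rw [hV, max_eq_left (by linarith)]
      rcases le_total r s with hrs | hrs
      · rw [min_eq_left hrs]
        rcases le_total θ r with h5 | h5
        · nlinarith
        · nlinarith
      · rw [min_eq_right hrs]
        rcases le_total θ s with h5 | h5
        · nlinarith
        · nlinarith
  -- optimal θ₀
  set θ₀ : ℝ := if 2 ≤ c then 0 else min r s with hθ₀def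
  have hθ₀ : 0 ≤ θ₀ := by rw [hθ₀def]; split <;> simp [hm]
  have hval : θ₀ * c + |r - θ₀| + |s - θ₀| = V := by
    rw [hθ₀def, hV]
    split
    · next h =>
      rw [max_eq_right (by linarith)]
      rw [sub_zero, sub_zero, abs_of_nonneg hr, abs_of_nonneg hs]
      ring
    · next h =>
      push_neg at h
      rw [max_eq_left (by linarith)]
      rcases le_total r s with hrs | hrs
      · rw [min_eq_left hrs, sub_self, abs_zero, abs_of_nonneg (by linarith)]
        ring
      · rw [min_eq_right hrs, sub_self, abs_zero, abs_of_nonneg (by linarith)]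
        ring
  have hreal : (⨅ θ : {θ : ℝ // 0 ≤ θ}, (θ.1 * c + |r - θ.1| + |s - θ.1|)) = V := by
    refine le_antisymm ?_ (le_ciInf fun θ => lb θ.1 θ.2)
    exact ciInf_le_of_le ⟨V, by rintro x ⟨⟨θ, hθ⟩, rfl⟩; exact lb θ hθ⟩ ⟨θ₀, hθ₀⟩ hval.le
  refine ⟨hreal, ?_⟩
  -- persp computation
  have hpersp : ∀ θ : ℝ≥0,
      persp tvEntropy (ENNReal.ofReal c) (Real.toNNReal r) (Real.toNNReal s) θ
        = ENNReal.ofReal ((θ:ℝ) * c + |r - θ| + |s - θ|) := by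
    intro θ
    have ecr : ((Real.toNNReal r : ℝ≥0∞)) = ENNReal.ofReal r := rfl
    have ecs : ((Real.toNNReal s : ℝ≥0∞)) = ENNReal.ofReal s := rfl
    rcases eq_or_ne θ 0 with rfl | hθ
    · rw [persp, if_pos rfl, ecr, ecs, ← ENNReal.ofReal_add hr hs]
      have : tvEntropy 0 = 1 := by simp [tvEntropy]
      rw [this, one_mul]
      congr 1
      rw [NNReal.coe_zero, sub_zero, sub_zero, abs_of_nonneg hr, abs_of_nonneg hs]
      ring
    · have hθ0 : (0:ℝ) < θ := by positivity
      rw [persp, if_neg hθ]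
      simp only [Lcost, tv_reverseEnt]
      have hcr : ((Real.toNNReal r / θ : ℝ≥0) : ℝ) = r / (θ:ℝ) := by
        rw [NNReal.coe_div, Real.coe_toNNReal _ hr]
      have hcs : ((Real.toNNReal s / θ : ℝ≥0) : ℝ) = s / (θ:ℝ) := by
        rw [NNReal.coe_div, Real.coe_toNNReal _ hs]
      have eθ : ((θ : ℝ≥0) : ℝ≥0∞) = ENNReal.ofReal (θ:ℝ) := (ENNReal.ofReal_coe_nnreal).symm
      rw [hcr, hcs, eθ, ← ENNReal.ofReal_add hc (abs_nonneg _),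
        ← ENNReal.ofReal_add (add_nonneg hc (abs_nonneg _)) (abs_nonneg _),
        ← ENNReal.ofReal_mul hθ0.le]
      congr 1
      have key : ∀ x : ℝ, (θ:ℝ) * |1 - x/(θ:ℝ)| = |x - θ| := by
        intro x
        have habs := abs_mul (θ:ℝ) (1 - x/(θ:ℝ))
        rw [abs_of_pos hθ0] at habs
        rw [← habs, show (θ:ℝ) * (1 - x/(θ:ℝ)) = -(x - θ) by field_simp; ring, abs_neg]
      have h2 := key r
      have h3 := key s
      rw [mul_add, mul_add, h2, h3, mul_comm]
  refine le_antisymm ?_ ?_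
  · have h := iInf_le (fun θ : ℝ≥0 =>
      persp tvEntropy (ENNReal.ofReal c) (Real.toNNReal r) (Real.toNNReal s) θ) θ₀.toNNReal
    rw [hpersp, Real.coe_toNNReal _ hθ₀, hval] at h
    exact h
  · refine le_iInf fun θ => ?_
    rw [hpersp]
    exact ENNReal.ofReal_le_ofReal (lb θ θ.2)

end
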